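/- There is no 4-dimensional unit vector v with entries in D[ω] such that, writing k for the least δ-exponent of v and u = δᵏv ∈ Z[ω]⁴, the four entries of u are congruent to 0, 1, δ, δ+1 (mod δ²) in some order. -/

import Mathlib

noncomputable section
open Complex

def ω : ℂ := Complex.exp (Real.pi * Complex.I / 4)

def δ : ℂ := 1 + ω

def inZω (x : ℂ) : Prop := ∃ a b c d : ℤ, x = a * ω^3 + b * ω^2 + c * ω + d

def inD (x : ℂ) : Prop := ∃ a : ℤ, ∃ n : ℕ, x = a / 2^n

def inDω (x : ℂ) : Prop :=
  ∃ a b c d : ℂ, inD a ∧ inD b ∧ inD c ∧ inD d ∧ x = a * ω^3 + b * ω^2 + c * ω + d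

def dvdZ (a b : ℂ) : Prop := ∃ t : ℂ, inZω t ∧ b = a * t

def isLde (n : ℕ) (k : ℕ) (v : Fin n → ℂ) : Prop :=
  (∀ i, inZω (δ^k * v i)) ∧ ∀ j : ℕ, j < k → ¬ (∀ i, inZω (δ^j * v i))

lemma hsqrt2 : ((Real.sqrt 2 : ℝ) : ℂ)^2 = 2 := by
  norm_cast
  rw [Real.sq_sqrt]
  norm_num

lemma omega_eq : ω = (↑(Real.sqrt 2))/2 + (↑(Real.sqrt 2))/2 * I := by
  rw [ω, show (↑Real.pi * I / 4 : ℂ) = ↑(Real.pi/4)*I by push_cast; ring, Complex.exp_mul_I,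
    ← Complex.ofReal_cos, ← Complex.ofReal_sin, Real.cos_pi_div_four, Real.sin_pi_div_four]
  push_cast; ring

lemma omega_sq : ω^2 = I := by
  rw [omega_eq]
  linear_combination (I/2)*hsqrt2 + ((Real.sqrt 2:ℂ))^2/4 * Complex.I_sq

lemma omega_pow4 : ω^4 = -1 := by
  have h : ω^4 = (ω^2)^2 := by ring
  rw [h, omega_sq, Complex.I_sq]

lemma conj_omega : (starRingEnd ℂ) ω = -ω^3 := by
  have h1 : ω * (-ω^3) = 1 := by linear_combination -omega_pow4
  have habs : ‖ω‖ = 1 := by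
    rw [show ω = Complex.exp (↑(Real.pi/4) * I) by rw [ω]; congr 1; push_cast; ring]
    exact Complex.norm_exp_ofReal_mul_I _
  have h2 : ω * (starRingEnd ℂ) ω = 1 := by
    rw [Complex.mul_conj, Complex.normSq_eq_norm_sq, habs]; norm_num
  calc (starRingEnd ℂ) ω = (starRingEnd ℂ) ω * (ω * (-ω^3)) := by rw [h1, mul_one]
    _ = (ω * (starRingEnd ℂ) ω) * (-ω^3) := by ring
    _ = -ω^3 := by rw [h2, one_mul]

lemma omega_cube : ω^3 = -(↑(Real.sqrt 2))/2 + (↑(Real.sqrt 2))/2 * I := by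
  have h : ω^3 = ω^2 * ω := by ring
  rw [h, omega_sq, omega_eq]
  linear_combination ((Real.sqrt 2:ℂ)/2) * Complex.I_sq

lemma int_mul_sqrt2 (m n : ℤ) (h : (m:ℝ) * Real.sqrt 2 = n) : m = 0 ∧ n = 0 := by
  have hm : m = 0 := by
    by_contra hm
    exact (irrational_sqrt_two.intCast_mul hm).ne_int n h
  refine ⟨hm, ?_⟩
  have : (n:ℝ) = 0 := by rw [← h, hm]; simp
  exact_mod_cast this

lemma indep (a b c d : ℤ) (h : (a:ℂ)*ω^3 + b*ω^2 + c*ω + d = 0) :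
    a = 0 ∧ b = 0 ∧ c = 0 ∧ d = 0 := by
  rw [omega_cube, omega_sq, omega_eq] at h
  have h' : ((((d:ℝ) + ((c:ℝ)-(a:ℝ))*Real.sqrt 2/2 : ℝ)) : ℂ)
      + (((b:ℝ) + ((a:ℝ)+(c:ℝ))*Real.sqrt 2/2 : ℝ) : ℂ)*I = 0 := by
    push_cast
    linear_combination h
  rw [Complex.ext_iff] at h'
  obtain ⟨h1, h2⟩ := h'
  simp at h1 h2
  have e1 : ((c - a : ℤ):ℝ) * Real.sqrt 2 = ((-2*d : ℤ):ℝ) := by push_cast; linarith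
  have e2 : ((a + c : ℤ):ℝ) * Real.sqrt 2 = ((-2*b : ℤ):ℝ) := by push_cast; linarith
  obtain ⟨f1, f2⟩ := int_mul_sqrt2 _ _ e1
  obtain ⟨g1, g2⟩ := int_mul_sqrt2 _ _ e2
  omega

lemma inZω_mul {x y : ℂ} (hx : inZω x) (hy : inZω y) : inZω (x*y) := by
  obtain ⟨a0,b0,c0,d0,rfl⟩ := hx
  obtain ⟨a1,b1,c1,d1,rfl⟩ := hy
  refine ⟨d0*a1 + c0*b1 + b0*c1 + a0*d1, d0*b1 + c0*c1 + b0*d1 - a0*a1,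
    d0*c1 + c0*d1 - b0*a1 - a0*b1, d0*d1 - c0*a1 - b0*b1 - a0*c1, ?_⟩
  push_cast
  linear_combination ((c0:ℂ)*a1 + b0*b1 + a0*c1 + ω*b0*a1 + ω*a0*b1 + ω^2*a0*a1) * omega_pow4

lemma inZω_sub {x y : ℂ} (hx : inZω x) (hy : inZω y) : inZω (x - y) := by
  obtain ⟨a0,b0,c0,d0,rfl⟩ := hx
  obtain ⟨a1,b1,c1,d1,rfl⟩ := hy
  exact ⟨a0-a1, b0-b1, c0-c1, d0-d1, by push_cast; ring⟩

lemma inZω_pow {x : ℂ} (hx : inZω x) (n : ℕ) : inZω (x^n) := by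
  induction n with
  | zero => exact ⟨0,0,0,1, by push_cast; ring⟩
  | succ n ih => rw [pow_succ]; exact inZω_mul ih hx

lemma inZω_delta : inZω (1 + ω) := ⟨0,0,1,1, by push_cast; ring⟩
lemma inZω_negomega3 : inZω (-ω^3) := ⟨-1,0,0,0, by push_cast; ring⟩

lemma final (p3 p2 p1 p0 : ℤ) (hp : Odd p2) (T : ℂ) (hT : inZω T)
    (h : (1+ω)^4 * T = (p3:ℂ)*ω^3 + (p2:ℂ)*ω^2 + (p1:ℂ)*ω + (p0:ℂ)) : False := by
  obtain ⟨a,b,c,d,rfl⟩ := hT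
  have key : ((4*d+6*c+4*b - p3 : ℤ):ℂ)*ω^3 + ((6*d+4*c-4*a-p2 : ℤ):ℂ)*ω^2
      + ((4*d-4*b-6*a-p1 : ℤ):ℂ)*ω + ((-4*c-6*b-4*a-p0 : ℤ):ℂ) = 0 := by
    push_cast
    linear_combination h - ((d:ℂ) + 4*c + 6*b + 4*a + ω*(c + 4*b + 6*a) + ω^2*(b+4*a) + ω^3*a) * omega_pow4
  obtain ⟨-, h2, -, -⟩ := indep _ _ _ _ key
  obtain ⟨l, rfl⟩ := hp
  omega

lemma conj_coords (a b c d : ℤ) : (starRingEnd ℂ) ((a:ℂ)*ω^3+(b:ℂ)*ω^2+(c:ℂ)*ω+(d:ℂ))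
    = -(c:ℂ)*ω^3-(b:ℂ)*ω^2-(a:ℂ)*ω+(d:ℂ) := by
  simp only [map_add, map_mul, map_pow, map_intCast, conj_omega]
  linear_combination ((b:ℂ)*ω^2 - (a:ℂ)*(ω^5-ω)) * omega_pow4

lemma conj_aff (r rb : ℂ) (hr : (starRingEnd ℂ) r = rb) (a b c d : ℤ) :
    (starRingEnd ℂ) (r + (1+ω)^2*((a:ℂ)*ω^3+(b:ℂ)*ω^2+(c:ℂ)*ω+(d:ℂ)))
    = rb + (1-ω^3)^2*(-(c:ℂ)*ω^3-(b:ℂ)*ω^2-(a:ℂ)*ω+(d:ℂ)) := by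
  rw [map_add, map_mul, map_pow, map_add, map_one, conj_omega, hr, conj_coords]
  ring

set_option maxHeartbeats 2000000 in
lemma master (x a0 b0 c0 d0 a1 b1 c1 d1 a2 b2 c2 d2 a3 b3 c3 d3 : ℂ) (h : x^4 = -1) :
    (0 + (1-x^3)^2*((-c0)*x^3 + (-b0)*x^2 + (-a0)*x + d0)) * (0 + (1+x)^2*(a0*x^3 + b0*x^2 + c0*x + d0)) + (1 + (1-x^3)^2*((-c1)*x^3 + (-b1)*x^2 + (-a1)*x + d1)) * (1 + (1+x)^2*(a1*x^3 + b1*x^2 + c1*x + d1)) + ((1-x^3) + (1-x^3)^2*((-c2)*x^3 + (-b2)*x^2 + (-a2)*x + d2)) * ((1+x) + (1+x)^2*(a2*x^3 + b2*x^2 + c2*x + d2)) + (((1-x^3)+1) + (1-x^3)^2*((-c3)*x^3 + (-b3)*x^2 + (-a3)*x + d3)) * (((1+x)+1) + (1+x)^2*(a3*x^3 + b3*x^2 + c3*x + d3))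
    = 8 + 3*(x - x^3) + (1+x)^3 * ((((-1)*d3 + (-1)*d3^2 + (-1)*c3*d3 + (-1)*c3^2 + (-1)*b3*c3 + (-1)*b3^2 + 2*a3 + a3*d3 + (-1)*a3*b3 + (-1)*a3^2 + (-1)*d2 + (-1)*d2^2 + (-1)*c2*d2 + (-1)*c2^2 + (-1)*b2*c2 + (-1)*b2^2 + a2 + a2*d2 + (-1)*a2*b2 + (-1)*a2^2 + (-1)*d1^2 + (-1)*c1*d1 + (-1)*c1^2 + (-1)*b1*c1 + (-1)*b1^2 + a1 + a1*d1 + (-1)*a1*b1 + (-1)*a1^2 + (-1)*d0^2 + (-1)*c0*d0 + (-1)*c0^2 + (-1)*b0*c0 + (-1)*b0^2 + a0*d0 + (-1)*a0*b0 + (-1)*a0^2))*x^3 + (((-1)*d3 + (-1)*d3^2 + (-1)*c3*d3 + (-1)*c3^2 + (-1)*b3*c3 + (-1)*b3^2 + 2*a3 + a3*d3 + (-1)*a3*b3 + (-1)*a3^2 + (-1)*d2 + (-1)*d2^2 + (-1)*c2*d2 + (-1)*c2^2 + (-1)*b2*c2 + (-1)*b2^2 + a2 + a2*d2 + (-1)*a2*b2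 + (-1)*a2^2 + (-1)*d1^2 + (-1)*c1*d1 + (-1)*c1^2 + (-1)*b1*c1 + (-1)*b1^2 + a1 + a1*d1 + (-1)*a1*b1 + (-1)*a1^2 + (-1)*d0^2 + (-1)*c0*d0 + (-1)*c0^2 + (-1)*b0*c0 + (-1)*b0^2 + a0*d0 + (-1)*a0*b0 + (-1)*a0^2))*x^2 + (((-1)*d3 + (-1)*c3 + (-1)*c3*d3 + 2*b3 + (-1)*b3*c3 + (-1)*a3 + a3*d3 + (-1)*a3*b3 + (-1)*c2 + (-1)*c2*d2 + b2 + (-1)*b2*c2 + a2*d2 + (-1)*a2*b2 + (-1)*d1 + (-1)*c1*d1 + b1 + (-1)*b1*c1 + (-1)*a1 + a1*d1 + (-1)*a1*b1 + (-1)*c0*d0 + (-1)*b0*c0 + a0*d0 + (-1)*a0*b0))*x + ((d3 + c3 + c3*d3 + (-2)*b3 + b3*c3 + a3 + (-1)*a3*d3 + a3*b3 + c2 + c2*d2 + (-1)*b2 + b2*c2 + (-1)*a2*d2 + a2*b2 + d1 + c1*d1 + (-1)*b1 + b1*c1 + a1 + (-1)*a1*d1 + a1*b1 + c0*d0 + b0*c0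 + (-1)*a0*d0 + a0*b0))) := by
  linear_combination ((-2) + 3*d3 + d3^2 + (-1)*c3 + (-1)*c3*d3 + 2*b3 + (-1)*b3*c3 + (-1)*a3 + a3*d3 + (-1)*a3*b3 + 2*d2 + d2^2 + (-1)*c2 + (-1)*c2*d2 + b2 + (-1)*b2*c2 + a2*d2 + (-1)*a2*b2 + d1 + d1^2 + (-1)*c1*d1 + b1 + (-1)*b1*c1 + (-1)*a1 + a1*d1 + (-1)*a1*b1 + d0^2 + (-1)*c0*d0 + (-1)*b0*c0 + a0*d0 + (-1)*a0*b0 + 3*x*d3 + 2*x*d3^2 + (-1)*x*c3*d3 + 4*x*b3 + (-2)*x*b3*c3 + (-4)*x*a3 + x*a3*d3 + (-2)*x*a3*b3 + 3*x*d2 + 2*x*d2^2 + (-1)*x*c2 + (-1)*x*c2*d2 + 2*x*b2 + (-2)*x*b2*c2 + (-1)*x*a2 + x*a2*d2 + (-2)*x*a2*b2 + 2*x*d1^2 + x*c1 + (-1)*x*c1*d1 + 2*x*b1 + (-2)*x*b1*c1 + (-3)*x*a1 + x*a1*d1 + (-2)*x*a1*b1 + 2*x*d0^2 + (-1)*x*c0*d0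 + (-2)*x*b0*c0 + x*a0*d0 + (-2)*x*a0*b0 + 3*x^2*d3 + 2*x^2*d3^2 + 4*x^2*c3 + 3*x^2*c3*d3 + x^2*c3^2 + x^2*b3*c3 + x^2*b3^2 + (-3)*x^2*a3 + (-3)*x^2*a3*d3 + (-1)*x^2*a3*c3 + x^2*a3*b3 + x^2*a3^2 + 2*x^2*d2 + 2*x^2*d2^2 + 2*x^2*c2 + 3*x^2*c2*d2 + x^2*c2^2 + x^2*b2*c2 + x^2*b2^2 + (-2)*x^2*a2 + (-3)*x^2*a2*d2 + (-1)*x^2*a2*c2 + x^2*a2*b2 + x^2*a2^2 + x^2*d1 + 2*x^2*d1^2 + 2*x^2*c1 + 3*x^2*c1*d1 + x^2*c1^2 + x^2*b1*c1 + x^2*b1^2 + (-1)*x^2*a1 + (-3)*x^2*a1*d1 + (-1)*x^2*a1*c1 + x^2*a1*b1 + x^2*a1^2 + 2*x^2*d0^2 + 3*x^2*c0*d0 + x^2*c0^2 + x^2*b0*c0 + x^2*b0^2 + (-3)*x^2*a0*d0 + (-1)*x^2*a0*c0 + x^2*a0*b0 + x^2*a0^2 + x^3*d3 + 2*x^3*d3^2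 + 2*x^3*c3 + 6*x^3*c3*d3 + 4*x^3*c3^2 + (-1)*x^3*b3 + 5*x^3*b3*c3 + 4*x^3*b3^2 + (-4)*x^3*a3 + (-6)*x^3*a3*d3 + (-2)*x^3*a3*c3 + 5*x^3*a3*b3 + 4*x^3*a3^2 + x^3*d2 + 2*x^3*d2^2 + 2*x^3*c2 + 6*x^3*c2*d2 + 4*x^3*c2^2 + (-1)*x^3*b2 + 5*x^3*b2*c2 + 4*x^3*b2^2 + (-3)*x^3*a2 + (-6)*x^3*a2*d2 + (-2)*x^3*a2*c2 + 5*x^3*a2*b2 + 4*x^3*a2^2 + 2*x^3*d1^2 + 6*x^3*c1*d1 + 4*x^3*c1^2 + 5*x^3*b1*c1 + 4*x^3*b1^2 + (-1)*x^3*a1 + (-6)*x^3*a1*d1 + (-2)*x^3*a1*c1 + 5*x^3*a1*b1 + 4*x^3*a1^2 + 2*x^3*d0^2 + 6*x^3*c0*d0 + 4*x^3*c0^2 + 5*x^3*b0*c0 + 4*x^3*b0^2 + (-6)*x^3*a0*d0 + (-2)*x^3*a0*c0 + 5*x^3*a0*b0 + 4*x^3*a0^2 + x^4*d3^2 + 4*x^4*c3*d3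 + 5*x^4*c3^2 + (-2)*x^4*b3 + 6*x^4*b3*c3 + 5*x^4*b3^2 + (-2)*x^4*a3 + (-4)*x^4*a3*d3 + (-1)*x^4*a3*c3 + 6*x^4*a3*b3 + 5*x^4*a3^2 + x^4*d2^2 + 4*x^4*c2*d2 + 5*x^4*c2^2 + (-1)*x^4*b2 + 6*x^4*b2*c2 + 5*x^4*b2^2 + (-2)*x^4*a2 + (-4)*x^4*a2*d2 + (-1)*x^4*a2*c2 + 6*x^4*a2*b2 + 5*x^4*a2^2 + x^4*d1^2 + 4*x^4*c1*d1 + 5*x^4*c1^2 + (-1)*x^4*b1 + 6*x^4*b1*c1 + 5*x^4*b1^2 + (-4)*x^4*a1*d1 + (-1)*x^4*a1*c1 + 6*x^4*a1*b1 + 5*x^4*a1^2 + x^4*d0^2 + 4*x^4*c0*d0 + 5*x^4*c0^2 + 6*x^4*b0*c0 + 5*x^4*b0^2 + (-4)*x^4*a0*d0 + (-1)*x^4*a0*c0 + 6*x^4*a0*b0 + 5*x^4*a0^2 + (-2)*x^5*c3 + 2*x^5*c3^2 + (-1)*x^5*b3 + 4*x^5*b3*c3 + 2*x^5*b3^2 +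 2*x^5*a3*c3 + 4*x^5*a3*b3 + 2*x^5*a3^2 + (-1)*x^5*c2 + 2*x^5*c2^2 + (-1)*x^5*b2 + 4*x^5*b2*c2 + 2*x^5*b2^2 + 2*x^5*a2*c2 + 4*x^5*a2*b2 + 2*x^5*a2^2 + (-1)*x^5*c1 + 2*x^5*c1^2 + 4*x^5*b1*c1 + 2*x^5*b1^2 + 2*x^5*a1*c1 + 4*x^5*a1*b1 + 2*x^5*a1^2 + 2*x^5*c0^2 + 4*x^5*b0*c0 + 2*x^5*b0^2 + 2*x^5*a0*c0 + 4*x^5*a0*b0 + 2*x^5*a0^2 + (-1)*x^6*c3 + (-2)*x^6*c3*d3 + (-1)*x^6*c3^2 + (-1)*x^6*b3^2 + 2*x^6*a3*d3 + 4*x^6*a3*c3 + (-1)*x^6*a3^2 + (-1)*x^6*c2 + (-2)*x^6*c2*d2 + (-1)*x^6*c2^2 + (-1)*x^6*b2^2 + 2*x^6*a2*d2 + 4*x^6*a2*c2 + (-1)*x^6*a2^2 + (-2)*x^6*c1*d1 + (-1)*x^6*c1^2 + (-1)*x^6*b1^2 + 2*x^6*a1*d1 + 4*x^6*a1*c1 +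 (-1)*x^6*a1^2 + (-2)*x^6*c0*d0 + (-1)*x^6*c0^2 + (-1)*x^6*b0^2 + 2*x^6*a0*d0 + 4*x^6*a0*c0 + (-1)*x^6*a0^2 + (-1)*x^7*c3*d3 + (-2)*x^7*c3^2 + (-2)*x^7*b3*c3 + (-2)*x^7*b3^2 + x^7*a3*d3 + 2*x^7*a3*c3 + (-2)*x^7*a3*b3 + (-2)*x^7*a3^2 + (-1)*x^7*c2*d2 + (-2)*x^7*c2^2 + (-2)*x^7*b2*c2 + (-2)*x^7*b2^2 + x^7*a2*d2 + 2*x^7*a2*c2 + (-2)*x^7*a2*b2 + (-2)*x^7*a2^2 + (-1)*x^7*c1*d1 + (-2)*x^7*c1^2 + (-2)*x^7*b1*c1 + (-2)*x^7*b1^2 + x^7*a1*d1 + 2*x^7*a1*c1 + (-2)*x^7*a1*b1 + (-2)*x^7*a1^2 + (-1)*x^7*c0*d0 + (-2)*x^7*c0^2 + (-2)*x^7*b0*c0 + (-2)*x^7*b0^2 + x^7*a0*d0 + 2*x^7*a0*c0 + (-2)*x^7*a0*b0 + (-2)*x^7*a0^2 + (-1)*x^8*c3^2 + (-2)*x^8*b3*c3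 + (-1)*x^8*b3^2 + (-1)*x^8*a3*c3 + (-2)*x^8*a3*b3 + (-1)*x^8*a3^2 + (-1)*x^8*c2^2 + (-2)*x^8*b2*c2 + (-1)*x^8*b2^2 + (-1)*x^8*a2*c2 + (-2)*x^8*a2*b2 + (-1)*x^8*a2^2 + (-1)*x^8*c1^2 + (-2)*x^8*b1*c1 + (-1)*x^8*b1^2 + (-1)*x^8*a1*c1 + (-2)*x^8*a1*b1 + (-1)*x^8*a1^2 + (-1)*x^8*c0^2 + (-2)*x^8*b0*c0 + (-1)*x^8*b0^2 + (-1)*x^8*a0*c0 + (-2)*x^8*a0*b0 + (-1)*x^8*a0^2 + (-1)*x^9*b3*c3 + (-2)*x^9*a3*c3 + (-1)*x^9*a3*b3 + (-1)*x^9*b2*c2 + (-2)*x^9*a2*c2 + (-1)*x^9*a2*b2 + (-1)*x^9*b1*c1 + (-2)*x^9*a1*c1 + (-1)*x^9*a1*b1 + (-1)*x^9*b0*c0 + (-2)*x^9*a0*c0 + (-1)*x^9*a0*b0 + (-1)*x^10*a3*c3 + (-1)*x^10*a2*c2 + (-1)*x^10*a1*c1 + (-1)*x^10*a0*c0) * 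h

lemma conj_delta : (starRingEnd ℂ) (1+ω) = 1 - ω^3 := by
  rw [map_add, map_one, conj_omega]; ring

lemma conj_delta1 : (starRingEnd ℂ) ((1+ω)+1) = (1-ω^3)+1 := by
  rw [map_add, map_one, conj_delta]

set_option maxHeartbeats 2000000 in
theorem no_unit_vector_with_residues_0_1_delta_deltaplusone
    (hfact : ∀ (w : Fin 4 → ℂ), (∀ i, inDω (w i)) →
      (∑ i, (starRingEnd ℂ) (w i) * w i) = 1 → ¬ isLde 4 1 w)
    (v : Fin 4 → ℂ) (k : ℕ)
    (hD : ∀ i, inDω (v i))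
    (hunit : (∑ i, (starRingEnd ℂ) (v i) * v i) = 1)
    (hlde : isLde 4 k v) :
    ¬ ∃ σ : Equiv.Perm (Fin 4),
        dvdZ (δ^2) (δ^k * v (σ 0) - 0) ∧
        dvdZ (δ^2) (δ^k * v (σ 1) - 1) ∧
        dvdZ (δ^2) (δ^k * v (σ 2) - δ) ∧
        dvdZ (δ^2) (δ^k * v (σ 3) - (δ + 1)) := by
  rintro ⟨σ, ⟨t0, hZ0, h0⟩, ⟨t1, hZ1, h1⟩, ⟨t2, hZ2, h2⟩, ⟨t3, hZ3, h3⟩⟩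
  obtain ⟨a0,b0,c0,d0,rfl⟩ := hZ0
  obtain ⟨a1,b1,c1,d1,rfl⟩ := hZ1
  obtain ⟨a2,b2,c2,d2,rfl⟩ := hZ2
  obtain ⟨a3,b3,c3,d3,rfl⟩ := hZ3
  have hd : δ = 1 + ω := rfl
  rw [hd] at h0 h1 h2 h3
  have e0 : (1+ω)^k * v (σ 0) = 0 + (1+ω)^2*((a0:ℂ)*ω^3+(b0:ℂ)*ω^2+(c0:ℂ)*ω+(d0:ℂ)) := by
    linear_combination h0
  have e1 : (1+ω)^k * v (σ 1) = 1 + (1+ω)^2*((a1:ℂ)*ω^3+(b1:ℂ)*ω^2+(c1:ℂ)*ω+(d1:ℂ)) := by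
    linear_combination h1
  have e2 : (1+ω)^k * v (σ 2) = (1+ω) + (1+ω)^2*((a2:ℂ)*ω^3+(b2:ℂ)*ω^2+(c2:ℂ)*ω+(d2:ℂ)) := by
    linear_combination h2
  have e3 : (1+ω)^k * v (σ 3) = ((1+ω)+1) + (1+ω)^2*((a3:ℂ)*ω^3+(b3:ℂ)*ω^2+(c3:ℂ)*ω+(d3:ℂ)) := by
    linear_combination h3
  have hsum2 : ∑ i, (starRingEnd ℂ) ((1+ω)^k * v i) * ((1+ω)^k * v i)
      = ((1+ω)*(1-ω^3))^k := by
    have step : ∀ i : Fin 4, (starRingEnd ℂ) ((1+ω)^k * v i) * ((1+ω)^k * v i)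
        = ((1+ω)*(1-ω^3))^k * ((starRingEnd ℂ) (v i) * v i) := by
      intro i
      rw [map_mul, map_pow, map_add, map_one, conj_omega, mul_pow]
      ring
    rw [Finset.sum_congr rfl (fun i _ => step i), ← Finset.mul_sum, hunit, mul_one]
  have hexp := (Equiv.sum_comp σ
      (fun i => (starRingEnd ℂ) ((1+ω)^k * v i) * ((1+ω)^k * v i))).trans hsum2
  simp only [Fin.sum_univ_four] at hexp
  rw [e0, e1, e2, e3,
    conj_aff 0 0 (map_zero _) a0 b0 c0 d0,
    conj_aff 1 1 (map_one _) a1 b1 c1 d1,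
    conj_aff (1+ω) (1-ω^3) conj_delta a2 b2 c2 d2,
    conj_aff ((1+ω)+1) ((1-ω^3)+1) conj_delta1 a3 b3 c3 d3] at hexp
  have hm := master ω (a0:ℂ) (b0:ℂ) (c0:ℂ) (d0:ℂ) (a1:ℂ) (b1:ℂ) (c1:ℂ) (d1:ℂ)
      (a2:ℂ) (b2:ℂ) (c2:ℂ) (d2:ℂ) (a3:ℂ) (b3:ℂ) (c3:ℂ) (d3:ℂ) omega_pow4
  obtain ⟨S3,S2,S1,S0, hkey⟩ : ∃ S3 S2 S1 S0 : ℤ, ((1+ω)*(1-ω^3))^k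
      = 8 + 3*(ω-ω^3) + (1+ω)^3*((S3:ℂ)*ω^3+(S2:ℂ)*ω^2+(S1:ℂ)*ω+(S0:ℂ)) := by
    refine ⟨((-1)*d3 + (-1)*d3^2 + (-1)*c3*d3 + (-1)*c3^2 + (-1)*b3*c3 + (-1)*b3^2 + 2*a3 + a3*d3 + (-1)*a3*b3 + (-1)*a3^2 + (-1)*d2 + (-1)*d2^2 + (-1)*c2*d2 + (-1)*c2^2 + (-1)*b2*c2 + (-1)*b2^2 + a2 + a2*d2 + (-1)*a2*b2 + (-1)*a2^2 + (-1)*d1^2 + (-1)*c1*d1 + (-1)*c1^2 + (-1)*b1*c1 + (-1)*b1^2 + a1 + a1*d1 + (-1)*a1*b1 + (-1)*a1^2 + (-1)*d0^2 + (-1)*c0*d0 + (-1)*c0^2 + (-1)*b0*c0 + (-1)*b0^2 + a0*d0 + (-1)*a0*b0 + (-1)*a0^2 : ℤ), ((-1)*d3 + (-1)*d3^2 + (-1)*c3*d3 + (-1)*c3^2 + (-1)*b3*c3 + (-1)*b3^2 + 2*a3 + a3*d3 + (-1)*a3*b3 + (-1)*a3^2 + (-1)*d2 + (-1)*d2^2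 + (-1)*c2*d2 + (-1)*c2^2 + (-1)*b2*c2 + (-1)*b2^2 + a2 + a2*d2 + (-1)*a2*b2 + (-1)*a2^2 + (-1)*d1^2 + (-1)*c1*d1 + (-1)*c1^2 + (-1)*b1*c1 + (-1)*b1^2 + a1 + a1*d1 + (-1)*a1*b1 + (-1)*a1^2 + (-1)*d0^2 + (-1)*c0*d0 + (-1)*c0^2 + (-1)*b0*c0 + (-1)*b0^2 + a0*d0 + (-1)*a0*b0 + (-1)*a0^2 : ℤ), ((-1)*d3 + (-1)*c3 + (-1)*c3*d3 + 2*b3 + (-1)*b3*c3 + (-1)*a3 + a3*d3 + (-1)*a3*b3 + (-1)*c2 + (-1)*c2*d2 + b2 + (-1)*b2*c2 + a2*d2 + (-1)*a2*b2 + (-1)*d1 + (-1)*c1*d1 + b1 + (-1)*b1*c1 + (-1)*a1 + a1*d1 + (-1)*a1*b1 + (-1)*c0*d0 + (-1)*b0*c0 + a0*d0 + (-1)*a0*b0 : ℤ), (d3 + c3 + c3*d3 + (-2)*b3 + b3*c3 + a3 + (-1)*a3*d3 + a3*b3 + c2 + c2*d2 + (-1)*b2 + b2*c2 + (-1)*a2*d2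 + a2*b2 + d1 + c1*d1 + (-1)*b1 + b1*c1 + a1 + (-1)*a1*d1 + a1*b1 + c0*d0 + b0*c0 + (-1)*a0*d0 + a0*b0 : ℤ), ?_⟩
    push_cast
    linear_combination hm - hexp
  clear hm hexp e0 e1 e2 e3 h0 h1 h2 h3
  rcases k with _|_|m
  · -- k = 0
    refine final 3 (-3) (-10) (-10) (by decide)
      ((S3:ℂ)*ω^3+(S2:ℂ)*ω^2+(S1:ℂ)*ω+(S0:ℂ)) ⟨S3,S2,S1,S0,rfl⟩ ?_
    push_cast
    linear_combination (-(1+ω))*hkey + 3*omega_pow4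
  · -- k = 1
    exact hfact v hD hunit hlde
  · -- k = m+2
    have hbase : (1+ω)*(1-ω^3) = -ω^3*(1+ω)^2 := by
      linear_combination (1+ω)*omega_pow4
    have hpow : ((1+ω)*(1-ω^3))^(m+2) = (1+ω)^3 * ((-ω^3)^(m+2) * (1+ω)^(2*m+1)) := by
      rw [hbase, mul_pow, ← pow_mul, show 2*(m+2) = 3 + (2*m+1) by ring, pow_add]
      ring
    rw [hpow] at hkey
    have hUZ : inZω ((-ω^3)^(m+2) * (1+ω)^(2*m+1)) :=
      inZω_mul (inZω_pow inZω_negomega3 _) (inZω_pow inZω_delta _)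
    refine final (-3) 3 11 11 (by decide)
      ((-ω^3)^(m+2) * (1+ω)^(2*m+1) - ((S3:ℂ)*ω^3+(S2:ℂ)*ω^2+(S1:ℂ)*ω+(S0:ℂ)))
      (inZω_sub hUZ ⟨S3,S2,S1,S0,rfl⟩) ?_
    push_cast
    linear_combination (1+ω)*hkey + (-3)*omega_pow4
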